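/- The join of C5 with the full family on one point satisfies ucs(C5 * P(1)) = 3. -/
import Mathlib


/-- The family `C5`: a function `f : ZMod 5 → Bool` belongs to `C5` iff it takes the
values 1-0-0-1 on some four consecutive vertices of the pentagon. -/
def C5 : Set (ZMod 5 → Bool) :=
  {f | ∃ i : ZMod 5, f i = true ∧ f (i + 1) = false ∧ f (i + 2) = false ∧ f (i + 3) = true}

/-- A family `F` shatters a finite set `X` if every `{0,1}`-function on `X`
has an extension in `F`. -/
def Shatters {B : Type*} (F : Set (B → Bool)) (X : Finset B) : Prop :=
  ∀ g : B → Bool, ∃ f ∈ F, ∀ x ∈ X, f x = g x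

/-- The VC-dimension of a family: the size of the largest shattered set. -/
noncomputable def vcDim {B : Type*} (F : Set (B → Bool)) : ℕ :=
  sSup {n | ∃ X : Finset B, Shatters F X ∧ X.card = n}

/-- `g : B → Option Bool` (a partial function, with domain the set of points
where `g` is `some _`) is a partial function (trace) of the family `F` if some `f ∈ F`
extends it. -/
def IsPartialOf {B : Type*} (F : Set (B → Bool)) (g : B → Option Bool) : Prop :=
  ∃ f ∈ F, ∀ x b, g x = some b → f x = b

/-- `F` admits an unlabeled compression scheme of size `k`: a pair `(α, β)` where `α`
maps every partial function `g` of `F` (with domain `S`) to a subset `α g ⊆ S` with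
`|α g| ≤ k`, `β` maps every subset of the base set to a total function, and
`β (α g)` extends `g`. -/
def HasUCS {B : Type*} (F : Set (B → Bool)) (k : ℕ) : Prop :=
  ∃ (α : (B → Option Bool) → Finset B) (β : Finset B → (B → Bool)),
    ∀ g : B → Option Bool, IsPartialOf F g →
      (∀ x ∈ α g, (g x).isSome) ∧ (α g).card ≤ k ∧
      (∀ x b, g x = some b → β (α g) x = b)

/-- The minimum size of an unlabeled compression scheme for `F`. -/
noncomputable def ucs {B : Type*} (F : Set (B → Bool)) : ℕ := sInf {k | HasUCS F k}

/-- The join of two families, over the disjoint union of their base sets. -/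
def famJoin {B1 B2 : Type*} (F : Set (B1 → Bool)) (G : Set (B2 → Bool)) :
    Set (B1 ⊕ B2 → Bool) :=
  {h | (fun x => h (Sum.inl x)) ∈ F ∧ (fun y => h (Sum.inr y)) ∈ G}

/-- `P 1`: the family of both functions on a one-element base set. -/
def P1 : Set (Unit → Bool) := Set.univ

/-! ### Auxiliary material for the proof -/

abbrev Pt : Type := ZMod 5 ⊕ Unit

instance decMemC5 (f : ZMod 5 → Bool) : Decidable (f ∈ C5) :=
  inferInstanceAs (Decidable (∃ i : ZMod 5,
    f i = true ∧ f (i + 1) = false ∧ f (i + 2) = false ∧ f (i + 3) = true))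

instance decMemP1 (f : Unit → Bool) : Decidable (f ∈ P1) := .isTrue trivial

instance decMemJoin (h : Pt → Bool) : Decidable (h ∈ famJoin C5 P1) :=
  inferInstanceAs (Decidable (((fun x => h (Sum.inl x)) ∈ C5) ∧ ((fun y => h (Sum.inr y)) ∈ P1)))

instance decPartial (g : Pt → Option Bool) : Decidable (IsPartialOf (famJoin C5 P1) g) :=
  inferInstanceAs (Decidable (∃ f, f ∈ famJoin C5 P1 ∧ ∀ x b, g x = some b → f x = b))

/-- The reconstruction table, one bit per (subset, point) pair. -/
def bigTable : ℕ :=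
  1119872537998101263707699239446065435727913724982463636922889937119241430677534861254955549615558221759

/-- Bitmask encoding of a subset of the six points. -/
def maskOf (S : Finset Pt) : ℕ :=
  (if Sum.inl 0 ∈ S then 1 else 0) + (if Sum.inl 1 ∈ S then 2 else 0) +
  (if Sum.inl 2 ∈ S then 4 else 0) + (if Sum.inl 3 ∈ S then 8 else 0) +
  (if Sum.inl 4 ∈ S then 16 else 0) + (if Sum.inr () ∈ S then 32 else 0)

/-- Index of a point. -/
def idxOf : Pt → ℕ
  | Sum.inl i => i.val
  | Sum.inr _ => 5

/-- The reconstruction map `β` of our size-3 unlabeled compression scheme. -/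
def myβ (S : Finset Pt) (x : Pt) : Bool := bigTable.testBit (6 * maskOf S + idxOf x)

set_option maxRecDepth 1000000 in
set_option maxHeartbeats 4000000 in
/-- Every member of the family, restricted to any domain, is reconstructed by `myβ`
from some subset of the domain of size at most 3. -/
theorem keyLemma : ∀ f : Pt → Bool, f ∈ famJoin C5 P1 → ∀ D : Finset Pt,
    ∃ S : Finset Pt, S ⊆ D ∧ S.card ≤ 3 ∧ ∀ x ∈ D, myβ S x = f x := by decide

/-- The compression map `α` of our scheme. -/
noncomputable def myα (g : Pt → Option Bool) : Finset Pt :=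
  if h : ∃ S : Finset Pt, (∀ x ∈ S, (g x).isSome) ∧ S.card ≤ 3 ∧
      (∀ x b, g x = some b → myβ S x = b) then h.choose else ∅

theorem hasUCS3 : HasUCS (famJoin C5 P1) 3 := by
  refine ⟨myα, myβ, ?_⟩
  intro g hg
  obtain ⟨f, hf, hfg⟩ := hg
  have hex : ∃ S : Finset Pt, (∀ x ∈ S, (g x).isSome) ∧ S.card ≤ 3 ∧
      (∀ x b, g x = some b → myβ S x = b) := by
    obtain ⟨S, hSD, hcard, hval⟩ :=
      keyLemma f hf (Finset.univ.filter fun x => (g x).isSome)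
    refine ⟨S, ?_, hcard, ?_⟩
    · intro x hx
      exact (Finset.mem_filter.mp (hSD hx)).2
    · intro x b hxb
      have hxD : x ∈ Finset.univ.filter fun x => (g x).isSome :=
        Finset.mem_filter.mpr ⟨Finset.mem_univ _, by rw [hxb]; rfl⟩
      exact (hval x hxD).trans (hfg x b hxb)
  have : myα g = hex.choose := by rw [myα, dif_pos hex]
  rw [this]
  exact hex.choose_spec

/-- The three-point set used for the lower bound. -/
def T3 : Finset Pt := {Sum.inl 0, Sum.inl 1, Sum.inr ()}

/-- The eight partial functions with domain `T3`. -/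
def g8 (b : Bool × Bool × Bool) : Pt → Option Bool := fun x =>
  match x with
  | Sum.inl i => if i = 0 then some b.1 else if i = 1 then some b.2.1 else none
  | Sum.inr _ => some b.2.2

set_option maxRecDepth 1000000 in
set_option maxHeartbeats 1000000 in
theorem g8_partial : ∀ b, IsPartialOf (famJoin C5 P1) (g8 b) := by decide

theorem g8_dom : ∀ b x, (g8 b x).isSome → x ∈ T3 := by decide

set_option maxRecDepth 1000000 in
set_option maxHeartbeats 1000000 in
theorem card7 :
    (Finset.univ.filter fun S : Finset Pt => S ⊆ T3 ∧ S.card ≤ 2).card = 7 := by decide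

theorem g8_inl0 (b : Bool × Bool × Bool) : g8 b (Sum.inl 0) = some b.1 := rfl
theorem g8_inl1 (b : Bool × Bool × Bool) : g8 b (Sum.inl 1) = some b.2.1 := rfl
theorem g8_inr (b : Bool × Bool × Bool) : g8 b (Sum.inr ()) = some b.2.2 := rfl

theorem notUCS2 : ¬ HasUCS (famJoin C5 P1) 2 := by
  rintro ⟨a, β, h⟩
  have hb := fun b => h (g8 b) (g8_partial b)
  have maps : ∀ b ∈ (Finset.univ : Finset (Bool × Bool × Bool)),
      a (g8 b) ∈ Finset.univ.filter fun S : Finset Pt => S ⊆ T3 ∧ S.card ≤ 2 := by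
    intro b _
    exact Finset.mem_filter.mpr ⟨Finset.mem_univ _,
      fun x hx => g8_dom b x ((hb b).1 x hx), (hb b).2.1⟩
  have hcard : (Finset.univ.filter fun S : Finset Pt => S ⊆ T3 ∧ S.card ≤ 2).card <
      (Finset.univ : Finset (Bool × Bool × Bool)).card := by
    rw [card7]
    decide
  obtain ⟨b, -, b', -, hne, heq⟩ :=
    Finset.exists_ne_map_eq_of_card_lt_of_maps_to hcard maps
  apply hne
  have e1 : b.1 = b'.1 := by
    have h1 := (hb b).2.2 (Sum.inl 0) b.1 (g8_inl0 b)
    have h2 := (hb b').2.2 (Sum.inl 0) b'.1 (g8_inl0 b')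
    rw [heq] at h1
    exact h1.symm.trans h2
  have e2 : b.2.1 = b'.2.1 := by
    have h1 := (hb b).2.2 (Sum.inl 1) b.2.1 (g8_inl1 b)
    have h2 := (hb b').2.2 (Sum.inl 1) b'.2.1 (g8_inl1 b')
    rw [heq] at h1
    exact h1.symm.trans h2
  have e3 : b.2.2 = b'.2.2 := by
    have h1 := (hb b).2.2 (Sum.inr ()) b.2.2 (g8_inr b)
    have h2 := (hb b').2.2 (Sum.inr ()) b'.2.2 (g8_inr b')
    rw [heq] at h1
    exact h1.symm.trans h2
  exact Prod.ext e1 (Prod.ext e2 e3)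

/-- `ucs (C5 * P 1) = 3`. -/
theorem ucs_join_C5_P1_eq_three : ucs (famJoin C5 P1) = 3 := by
  have h3 : HasUCS (famJoin C5 P1) 3 := hasUCS3
  refine le_antisymm (Nat.sInf_le h3) ?_
  refine le_csInf ⟨3, h3⟩ ?_
  intro k hk
  by_contra hlt
  push_neg at hlt
  apply notUCS2
  obtain ⟨a, β, hh⟩ := hk
  exact ⟨a, β, fun g hg =>
    ⟨(hh g hg).1, (hh g hg).2.1.trans (by omega), (hh g hg).2.2⟩⟩
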